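/- Let R be a Noetherian local ring and I an ideal generated by a regular sequence. Let g : Y → Spec R be the blowup of I and E the exceptional Cartier divisor. Then for every e ≥ 1, H^0(Y, O_Y(−eE)) = I^e. -/

import Mathlib

/-!
STATEMENT 11: Let `R` be a Noetherian local ring and `I` an ideal generated by a regular
sequence (with `I ≠ 0` prime, as in the source).  Let `g : Y → Spec R` be the blowup of
`I` with exceptional Cartier divisor `E`.  Then `H⁰(Y, O_Y(-eE)) = I^e` for all `e ≥ 1`.

Encoding: for the blowup `Y = Proj (⊕_d I^d)` one has the standard identification
`H⁰(Y, O_Y(-eE)) = ⋃_{n≥0} (I^{n+e} : I^n)` (the Ratliff–Rush closure of `I^e`),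
so the statement is formalized as `⋃_n (I^{n+e} : I^n) = I^e`.
-/



open MvPolynomial Ideal

section Helpers

variable {R : Type*} [CommRing R]

/-- degree of a Finsupp.cons -/
lemma degree_cons {c : ℕ} (i : ℕ) (m : Fin c →₀ ℕ) :
    Finsupp.degree (Finsupp.cons i m) = i + Finsupp.degree m := by
  classical
  have h := Finsupp.sum_cons c m i
  simpa [Finsupp.degree_apply, Finsupp.sum] using h

lemma isHomogeneous_iff_degree {c : ℕ} (F : MvPolynomial (Fin c) R) (n : ℕ) :
    F.IsHomogeneous n ↔ ∀ d, F.coeff d ≠ 0 → Finsupp.degree d = n := by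
  unfold MvPolynomial.IsHomogeneous MvPolynomial.IsWeightedHomogeneous
  simp [Pi.one_def, ← Finsupp.degree_eq_weight_one]

lemma prod_pow_mem_aux {ι : Type*} (I : Ideal R) (x : ι → R) (hx : ∀ i, x i ∈ I)
    (s : Finset ι) (f : ι → ℕ) : (∏ i ∈ s, x i ^ f i) ∈ I ^ (∑ i ∈ s, f i) := by
  induction s using Finset.cons_induction with
  | empty => simp
  | cons a s ha ih =>
      rw [Finset.prod_cons, Finset.sum_cons, pow_add]
      exact Ideal.mul_mem_mul (Ideal.pow_mem_pow (hx a) _) ih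

lemma prod_pow_mem {c : ℕ} (x : Fin c → R) (d : Fin c →₀ ℕ) :
    (∏ i ∈ d.support, x i ^ d i) ∈ (Ideal.span (Set.range x)) ^ (Finsupp.degree d) := by
  rw [Finsupp.degree]
  exact prod_pow_mem_aux _ x (fun i => Ideal.subset_span (Set.mem_range_self i)) _ _

/-- evaluation of a homogeneous polynomial of degree n lands in I^n, refined:
coefficients in K gives membership in K * I^n -/
lemma eval_mem_mul {c : ℕ} (x : Fin c → R) {F : MvPolynomial (Fin c) R} {n : ℕ}
    (hF : F.IsHomogeneous n) (K : Ideal R) (hK : ∀ d, F.coeff d ∈ K) :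
    MvPolynomial.eval x F ∈ K * (Ideal.span (Set.range x)) ^ n := by
  classical
  rw [MvPolynomial.eval_eq]
  refine Submodule.sum_mem _ (fun d hd => ?_)
  have hd' : F.coeff d ≠ 0 := MvPolynomial.mem_support_iff.mp hd
  have hdeg : Finsupp.degree d = n := (isHomogeneous_iff_degree F n).mp hF d hd'
  exact hdeg ▸ Ideal.mul_mem_mul (hK d) (prod_pow_mem x d)

lemma eval_mem {c : ℕ} (x : Fin c → R) {F : MvPolynomial (Fin c) R} {n : ℕ}
    (hF : F.IsHomogeneous n) :
    MvPolynomial.eval x F ∈ (Ideal.span (Set.range x)) ^ n := by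
  have := eval_mem_mul x hF ⊤ (fun d => trivial)
  simpa using this

/-- surjectivity: every element of I^n is the value of a homogeneous polynomial of degree n -/
lemma exists_homogeneous_eval {c : ℕ} (x : Fin c → R) {n : ℕ} {z : R}
    (hz : z ∈ (Ideal.span (Set.range x)) ^ n) :
    ∃ G : MvPolynomial (Fin c) R, G.IsHomogeneous n ∧ MvPolynomial.eval x G = z := by
  induction n generalizing z with
  | zero =>
      exact ⟨MvPolynomial.C z, MvPolynomial.isHomogeneous_C _ _, by simp⟩
  | succ n ih =>
      rw [pow_succ] at hz
      refine Submodule.mul_induction_on hz (fun m hm y hy => ?_) (fun u v hu hv => ?_)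
      · obtain ⟨G, hG, hGe⟩ := ih hm
        obtain ⟨r, hr⟩ := (Submodule.mem_span_range_iff_exists_fun R).mp hy
        refine ⟨G * (∑ i, MvPolynomial.C (r i) * MvPolynomial.X i), ?_, ?_⟩
        · exact hG.mul (MvPolynomial.IsHomogeneous.sum _ _ _
            (fun i _ => MvPolynomial.isHomogeneous_C_mul_X _ _))
        · rw [_root_.map_mul, hGe, ← hr]
          simp [smul_eq_mul]
      · obtain ⟨G, hG, hGe⟩ := hu
        obtain ⟨H, hH, hHe⟩ := hv
        exact ⟨G + H, hG.add hH, by simp [hGe, hHe]⟩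

/-- every element of I^{n+1} is the value of a homogeneous polynomial of degree n
with coefficients in I -/
lemma exists_homogeneous_eval' {c : ℕ} (x : Fin c → R) {n : ℕ} {z : R}
    (hz : z ∈ (Ideal.span (Set.range x)) ^ (n + 1)) :
    ∃ H : MvPolynomial (Fin c) R, H.IsHomogeneous n ∧
      (∀ d, H.coeff d ∈ Ideal.span (Set.range x)) ∧ MvPolynomial.eval x H = z := by
  rw [pow_succ] at hz
  refine Submodule.mul_induction_on hz (fun m hm y hy => ?_) (fun u v hu hv => ?_)
  · obtain ⟨G, hG, hGe⟩ := exists_homogeneous_eval x hm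
    refine ⟨MvPolynomial.C y * G, ?_, ?_, ?_⟩
    · simpa using (MvPolynomial.isHomogeneous_C _ y).mul hG
    · intro d
      rw [MvPolynomial.coeff_C_mul]
      exact Ideal.mul_mem_right _ _ hy
    · rw [_root_.map_mul, hGe, MvPolynomial.eval_C, mul_comm]
  · obtain ⟨G, hG, hGc, hGe⟩ := hu
    obtain ⟨H, hH, hHc, hHe⟩ := hv
    exact ⟨G + H, hG.add hH, fun d => by
      rw [MvPolynomial.coeff_add]; exact add_mem (hGc d) (hHc d), by simp [hGe, hHe]⟩

end Helpers

section QRsec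

variable {R : Type*} [CommRing R]

lemma eval_homog_zero {c : ℕ} (x : Fin c → R) {F : MvPolynomial (Fin c) R}
    (hF : F.IsHomogeneous 0) : MvPolynomial.eval x F = F.coeff 0 := by
  classical
  rw [MvPolynomial.eval_eq]
  have hsub : F.support ⊆ {0} := by
    intro d hd
    have := (isHomogeneous_iff_degree F 0).mp hF d (MvPolynomial.mem_support_iff.mp hd)
    rw [Finsupp.degree_eq_zero_iff] at this
    simp [this]
  rw [Finset.sum_subset hsub (fun d _ hd => by
    rw [MvPolynomial.notMem_support_iff.mp hd, zero_mul])]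
  simp

open RingTheory.Sequence

variable [IsNoetherianRing R] [IsLocalRing R]

set_option maxHeartbeats 2000000 in
theorem quasi_regular : ∀ (c : ℕ) (x : Fin c → R), IsRegular R (List.ofFn x) →
    ∀ (n : ℕ) (F : MvPolynomial (Fin c) R), F.IsHomogeneous n →
    MvPolynomial.eval x F ∈ (Ideal.span (Set.range x)) ^ (n + 1) →
    ∀ d, F.coeff d ∈ Ideal.span (Set.range x) := by
  intro c
  induction c with
  | zero =>
      intro x _ n F hF hFe d
      have hI : Ideal.span (Set.range x) = ⊥ := by
        rw [Set.range_eq_empty x, Ideal.span_empty]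
      rw [hI] at hFe ⊢
      have hFe0 : MvPolynomial.eval x F = 0 := by
        have : (⊥ : Ideal R) ^ (n + 1) = ⊥ := by
          rw [← Ideal.zero_eq_bot, zero_pow (Nat.succ_ne_zero n)]
        rw [this] at hFe
        simpa using hFe
      have hd0 : d = 0 := Subsingleton.elim d 0
      subst hd0
      cases n with
      | zero =>
          rw [← eval_homog_zero x hF, hFe0]
          exact Submodule.zero_mem _
      | succ m =>
          rw [hF.coeff_eq_zero (by simp)]
          exact Submodule.zero_mem _
  | succ c IHc =>
      intro x hreg
      set a := x 0 with ha_def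
      set x' := Fin.tail x with hx'
      set I := Ideal.span (Set.range x) with hI
      set J := Ideal.span (Set.range x') with hJ
      have hxcons : x = Fin.cons a x' := (Fin.cons_self_tail x).symm
      have haI : a ∈ I := Ideal.subset_span (Set.mem_range_self 0)
      have hJI : J ≤ I := Ideal.span_mono (by rintro _ ⟨i, rfl⟩; exact ⟨i.succ, rfl⟩)
      have hofn : List.ofFn x = a :: List.ofFn x' := by
        rw [List.ofFn_succ]; rfl
      have hJeq : Ideal.ofList (List.ofFn x') = J := by
        rw [Ideal.ofList, hJ]
        congr 1
        ext r
        simp [List.mem_ofFn]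
      have hperm : IsRegular R (List.ofFn x' ++ [a]) := by
        refine IsLocalRing.isRegular_of_perm (hofn ▸ hreg) ?_
        exact (List.perm_append_singleton a (List.ofFn x')).symm
      obtain ⟨hw, hnetop⟩ := hperm
      rw [isWeaklyRegular_append_iff] at hw
      obtain ⟨hw1, hw2⟩ := hw
      have hJtop : (Ideal.ofList (List.ofFn x') • ⊤ : Submodule R R)
          = (J : Submodule R R) := by
        rw [hJeq, smul_eq_mul, Ideal.mul_top]
      rw [hJtop] at hw2
      have hnzd : ∀ y : R, a * y ∈ J → y ∈ J := by
        have hsmul : IsSMulRegular (R ⧸ (J : Submodule R R)) a :=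
          (isWeaklyRegular_singleton_iff _ _).mp hw2
        intro y hy
        have h1 : a • (Submodule.Quotient.mk y : R ⧸ (J : Submodule R R))
            = a • (0 : R ⧸ (J : Submodule R R)) := by
          rw [smul_zero, ← Submodule.Quotient.mk_smul, Submodule.Quotient.mk_eq_zero]
          simpa [smul_eq_mul] using hy
        have h2 := hsmul h1
        rwa [Submodule.Quotient.mk_eq_zero] at h2
      have hsm : ∀ K : Ideal R, (K • ⊤ : Submodule R R) = K := fun K => by
        rw [smul_eq_mul, Ideal.mul_top]
      rw [hsm] at hnetop
      have hregJ : IsRegular R (List.ofFn x') := by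
        refine ⟨hw1, ?_⟩
        rw [hsm]
        intro htop
        apply hnetop
        refine le_antisymm ?_ le_top
        rw [Ideal.ofList_append, ← htop]
        exact le_sup_left
      have QRJ : ∀ (k : ℕ) (G : MvPolynomial (Fin c) R), G.IsHomogeneous k →
          MvPolynomial.eval x' G ∈ J ^ (k + 1) → ∀ d, G.coeff d ∈ J :=
        fun k G hG hGe => IHc x' hregJ k G hG hGe
      have claim1 : ∀ (m : ℕ) (y : R), a * y ∈ J ^ m → y ∈ J ^ m := by
        intro m y hy
        suffices h : ∀ k, k ≤ m → y ∈ J ^ k from h m le_rfl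
        intro k hk
        induction k with
        | zero => simp
        | succ k ih =>
            have hyk : y ∈ J ^ k := ih (le_trans (Nat.le_succ k) hk)
            obtain ⟨G, hG, hGe⟩ := exists_homogeneous_eval x' hyk
            have hCG : (MvPolynomial.C a * G).IsHomogeneous k := by
              simpa using (MvPolynomial.isHomogeneous_C _ a).mul hG
            have hCGe : MvPolynomial.eval x' (MvPolynomial.C a * G) ∈ J ^ (k + 1) := by
              rw [_root_.map_mul, MvPolynomial.eval_C, hGe]
              exact Ideal.pow_le_pow_right hk hy
            have hcoeff := QRJ k _ hCG hCGe
            have hGc : ∀ d, G.coeff d ∈ J := fun d => hnzd _ (by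
              have := hcoeff d; rwa [MvPolynomial.coeff_C_mul] at this)
            have hmem := eval_mem_mul x' hG J hGc
            rw [hGe, ← pow_succ'] at hmem
            exact hmem
      intro n
      induction n using Nat.strong_induction_on with
      | _ n IHn =>
      intro F hF hFe
      obtain ⟨H, hH, hHc, hHe⟩ := exists_homogeneous_eval' x hFe
      set F₂ := F - H with hF₂def
      have hF₂h : F₂.IsHomogeneous n := hF.sub hH
      have hF₂e : MvPolynomial.eval x F₂ = 0 := by
        rw [hF₂def, map_sub, hHe, sub_self]
      suffices hsuff : ∀ d, F₂.coeff d ∈ I by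
        intro d
        have heq : F.coeff d = F₂.coeff d + H.coeff d := by
          rw [hF₂def, MvPolynomial.coeff_sub]; ring
        rw [heq]
        exact add_mem (hsuff d) (hHc d)
      cases n with
      | zero =>
          intro d
          by_cases h0 : F₂.coeff d = 0
          · rw [h0]; exact Submodule.zero_mem _
          · have hdeg : Finsupp.degree d = 0 := (isHomogeneous_iff_degree _ _).mp hF₂h d h0
            have hd0 : d = 0 := (Finsupp.degree_eq_zero_iff d).mp hdeg
            rw [hd0, ← eval_homog_zero x hF₂h, hF₂e]
            exact Submodule.zero_mem _
      | succ m =>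
          set p := MvPolynomial.finSuccEquiv R c F₂ with hp
          have hP : (p.coeff 0).IsHomogeneous (m + 1) :=
            hF₂h.finSuccEquiv_coeff_isHomogeneous 0 (m + 1) (by omega)
          set q : Polynomial R := p.map (MvPolynomial.eval x') with hq
          have hqe : q.eval a = 0 := by
            rw [hq, hp, ← MvPolynomial.eval_eq_eval_mv_eval', ← hxcons]
            exact hF₂e
          set w : R := q.divX.eval a with hwdef
          have hq0 : q.coeff 0 = MvPolynomial.eval x' (p.coeff 0) := by
            rw [hq, Polynomial.coeff_map]
          have hkey : MvPolynomial.eval x' (p.coeff 0) + a * w = 0 := by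
            have h3 := congrArg (Polynomial.eval a) (Polynomial.divX_mul_X_add q)
            rw [hqe] at h3
            simp only [Polynomial.eval_add, Polynomial.eval_mul, Polynomial.eval_X,
              Polynomial.eval_C] at h3
            rw [hq0] at h3
            rw [← h3]
            ring
          have hPe : MvPolynomial.eval x' (p.coeff 0) ∈ J ^ (m + 1) := eval_mem x' hP
          have haw : a * w ∈ J ^ (m + 1) := by
            have hneg : a * w = -(MvPolynomial.eval x' (p.coeff 0)) :=
              eq_neg_of_add_eq_zero_right hkey
            rw [hneg]
            exact neg_mem hPe
          have hwJ : w ∈ J ^ (m + 1) := claim1 _ _ haw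
          set Q : MvPolynomial (Fin (c + 1)) R :=
            (MvPolynomial.finSuccEquiv R c).symm p.divX with hQdef
          have hfsQ : MvPolynomial.finSuccEquiv R c Q = p.divX :=
            AlgEquiv.apply_symm_apply _ _
          have hQcoeff : ∀ (i : ℕ) (t : Fin c →₀ ℕ),
              Q.coeff (Finsupp.cons i t) = F₂.coeff (Finsupp.cons (i + 1) t) := by
            intro i t
            rw [← MvPolynomial.finSuccEquiv_coeff_coeff, hfsQ, Polynomial.coeff_divX,
              hp, MvPolynomial.finSuccEquiv_coeff_coeff]
          have hQhom : Q.IsHomogeneous m := by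
            rw [isHomogeneous_iff_degree]
            intro d hd
            obtain ⟨i, t, rfl⟩ : ∃ i t, d = Finsupp.cons i t :=
              ⟨d 0, Finsupp.tail d, (Finsupp.cons_tail d).symm⟩
            rw [hQcoeff] at hd
            have h5 := (isHomogeneous_iff_degree _ _).mp hF₂h _ hd
            rw [degree_cons] at h5
            rw [degree_cons]
            omega
          have hQe : MvPolynomial.eval x Q = w := by
            rw [hxcons, MvPolynomial.eval_eq_eval_mv_eval', hfsQ, hwdef]
            congr 1
            ext k
            rw [Polynomial.coeff_map, Polynomial.coeff_divX, Polynomial.coeff_divX,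
              hq, Polynomial.coeff_map]
          have hQmem : MvPolynomial.eval x Q ∈ I ^ (m + 1) := by
            rw [hQe]
            exact Ideal.pow_right_mono hJI (m + 1) hwJ
          have hQc : ∀ d, Q.coeff d ∈ I := IHn m (Nat.lt_succ_self m) Q hQhom hQmem
          obtain ⟨G, hGh, hGe⟩ := exists_homogeneous_eval x' hwJ
          have hPG : (p.coeff 0 + MvPolynomial.C a * G).IsHomogeneous (m + 1) :=
            hP.add (by simpa using (MvPolynomial.isHomogeneous_C _ a).mul hGh)
          have hPGe : MvPolynomial.eval x' (p.coeff 0 + MvPolynomial.C a * G)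
              ∈ J ^ (m + 1 + 1) := by
            rw [map_add, _root_.map_mul, MvPolynomial.eval_C, hGe, hkey]
            exact Submodule.zero_mem _
          have hPc := QRJ (m + 1) _ hPG hPGe
          intro d
          obtain ⟨i, t, rfl⟩ : ∃ i t, d = Finsupp.cons i t :=
            ⟨d 0, Finsupp.tail d, (Finsupp.cons_tail d).symm⟩
          cases i with
          | zero =>
              have heq : F₂.coeff (Finsupp.cons 0 t) = (p.coeff 0).coeff t := by
                rw [hp, MvPolynomial.finSuccEquiv_coeff_coeff]
              rw [heq]
              have h1 := hPc t
              rw [MvPolynomial.coeff_add, MvPolynomial.coeff_C_mul] at h1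
              have h2 : (p.coeff 0).coeff t
                  = ((p.coeff 0).coeff t + a * G.coeff t) - a * G.coeff t := by ring
              rw [h2]
              exact sub_mem (hJI h1) (Ideal.mul_mem_right _ _ haI)
          | succ k =>
              rw [← hQcoeff k t]
              exact hQc _



end QRsec

section Final

open RingTheory.Sequence

variable {R : Type*} [CommRing R] [IsNoetherianRing R] [IsLocalRing R]

lemma colon_step {c : ℕ} (x : Fin (c + 1) → R) (hreg : IsRegular R (List.ofFn x))
    (m : ℕ) (y : R) (hy : y * x 0 ∈ (Ideal.span (Set.range x)) ^ (m + 1)) :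
    y ∈ (Ideal.span (Set.range x)) ^ m := by
  set I := Ideal.span (Set.range x) with hIdef
  suffices h : ∀ k, k ≤ m → y ∈ I ^ k from h m le_rfl
  intro k hk
  induction k with
  | zero => simp
  | succ k ih =>
      have hyk := ih (k.le_succ.trans hk)
      obtain ⟨G, hG, hGe⟩ := exists_homogeneous_eval x hyk
      have hXG : (MvPolynomial.X 0 * G).IsHomogeneous (k + 1) := by
        simpa [add_comm] using (MvPolynomial.isHomogeneous_X R 0).mul hG
      have hXGe : MvPolynomial.eval x (MvPolynomial.X 0 * G) ∈ I ^ (k + 1 + 1) := by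
        rw [_root_.map_mul, MvPolynomial.eval_X, hGe, mul_comm]
        exact Ideal.pow_le_pow_right (by omega) hy
      have hc := quasi_regular (c + 1) x hreg (k + 1) _ hXG hXGe
      have hGc : ∀ d, G.coeff d ∈ I := by
        intro d
        have h2 := hc (Finsupp.single 0 1 + d)
        rwa [MvPolynomial.coeff_X_mul] at h2
      have h3 := eval_mem_mul x hG I hGc
      rwa [hGe, ← pow_succ'] at h3

end Final

theorem stmt11 {R : Type*} [CommRing R] [IsNoetherianRing R] [IsLocalRing R]
    (I : Ideal R) (hprime : I.IsPrime) (hne : I ≠ ⊥)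
    (as : List R) (hreg : RingTheory.Sequence.IsRegular R as) (hI : I = Ideal.ofList as)
    (e : ℕ) (he : 0 < e) :
    (⨆ n : ℕ, (I ^ (n + e)).colon ((I ^ n : Ideal R) : Set R)) = I ^ e := by
  rcases as with _ | ⟨a, bs⟩
  · exact absurd (hI.trans Ideal.ofList_nil) hne
  set x : Fin (bs.length + 1) → R := (a :: bs).get with hx
  have hofn : List.ofFn x = a :: bs := List.ofFn_get _
  have hreg' : RingTheory.Sequence.IsRegular R (List.ofFn x) := hofn ▸ hreg
  have hIx : I = Ideal.span (Set.range x) := by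
    rw [hI, Ideal.ofList]
    congr 1
    ext r
    simp [hx, List.mem_iff_get]
  have hx0 : x 0 = a := rfl
  have haI : a ∈ I := by
    rw [hI]
    exact Ideal.subset_span (by simp)
  have key : ∀ (n : ℕ) (y : R), y * a ^ n ∈ I ^ (n + e) → y ∈ I ^ e := by
    intro n
    induction n with
    | zero => intro y h; simpa using h
    | succ n ih =>
        intro y h
        apply ih
        have h2 : (y * a ^ n) * x 0 ∈ (Ideal.span (Set.range x)) ^ ((n + e) + 1) := by
          rw [hx0, ← hIx]
          have : y * a ^ n * a = y * a ^ (n + 1) := by ring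
          rw [this]
          convert h using 2
          omega
        have h3 := colon_step x hreg' (n + e) _ h2
        rwa [← hIx] at h3
  refine le_antisymm (iSup_le fun n => ?_) ?_
  · intro z hz
    have han : a ^ n ∈ I ^ n := Ideal.pow_mem_pow haI n
    have hzn : z * a ^ n ∈ I ^ (n + e) := by
      have := Submodule.mem_colon.mp hz _ han
      rwa [smul_eq_mul] at this
    exact key n z hzn
  · refine le_trans ?_ (le_iSup _ 0)
    intro z hz
    rw [Submodule.mem_colon]
    intro p hp
    rw [smul_eq_mul, zero_add]
    exact Ideal.mul_mem_right _ _ hz
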